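/- Let X be a finite set with |X| ≥ 5 and let 𝓕 be a symmetric conservative clone on X some binary member of which is not a projection. Then for all distinct a₁, a₂ ∈ X there exists a binary f ∈ 𝓕 such that f(a₁, a₂) = a₂, f(a₂, a₁) = a₁, and f(b₁, b₂) = b₁ for all distinct b₁, b₂ ∈ X with {b₁, b₂} ≠ {a₁, a₂}. -/

import Mathlib

/-- `F` is a clone on `X`. -/
def IsClone {X : Type*} (F : ∀ n : ℕ, Set ((Fin n → X) → X)) : Prop :=
  (∀ n : ℕ, ∀ i : Fin n, (fun x : Fin n → X => x i) ∈ F n) ∧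
  (∀ n m : ℕ, 0 < n → 0 < m → ∀ f ∈ F n, ∀ g : Fin n → (Fin m → X) → X,
    (∀ i, g i ∈ F m) → (fun x : Fin m → X => f fun i => g i x) ∈ F m)

/-- `f` is a projection (monarchy). -/
def IsProj {X : Type*} (n : ℕ) (f : (Fin n → X) → X) : Prop :=
  ∃ t : Fin n, ∀ x : Fin n → X, f x = x t

/-- The clone `F` is symmetric. -/
def SymClone {X : Type*} (F : ∀ n : ℕ, Set ((Fin n → X) → X)) : Prop :=
  ∀ π : Equiv.Perm X, ∀ n : ℕ, ∀ f ∈ F n,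
    (fun x : Fin n → X => π.symm (f fun i => π (x i))) ∈ F n

/-- The clone `F` is conservative: every member always returns one of its
arguments. -/
def Conservative {X : Type*} (F : ∀ n : ℕ, Set ((Fin n → X) → X)) : Prop :=
  ∀ n : ℕ, ∀ f ∈ F n, ∀ x : Fin n → X, ∃ i : Fin n, f x = x i

section Clo
variable {X : Type*} (F : ∀ n : ℕ, Set ((Fin n → X) → X))

/-- the "swap set" of a binary operation -/
def SOf (g : (Fin 2 → X) → X) : Set (X × X) := {p | p.1 ≠ p.2 ∧ g ![p.1, p.2] = p.2}

def Mem2 (S : Set (X × X)) : Prop := ∃ g ∈ F 2, SOf g = S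

variable {F}
variable (hF : IsClone F) (hcons : Conservative F) (hsym : SymClone F)

lemma vec2_eta (x : Fin 2 → X) : ![x 0, x 1] = x := by
  funext i; fin_cases i <;> rfl

include hcons in
lemma cons2 {g} (hg : g ∈ F 2) (x y : X) : g ![x, y] = x ∨ g ![x, y] = y := by
  obtain ⟨i, hi⟩ := hcons 2 g hg ![x, y]
  fin_cases i
  · left; simpa using hi
  · right; simpa using hi

include hcons in
lemma consDiag {g} (hg : g ∈ F 2) (x : X) : g ![x, x] = x := by
  rcases cons2 hcons hg x x with h | h <;> exact h

include hF in
lemma comp2 {g h₀ h₁} (hg : g ∈ F 2) (hh₀ : h₀ ∈ F 2) (hh₁ : h₁ ∈ F 2) :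
    (fun x : Fin 2 → X => g ![h₀ x, h₁ x]) ∈ F 2 := by
  have := hF.2 2 2 (by norm_num) (by norm_num) g hg ![h₀, h₁]
    (by intro i; fin_cases i <;> simpa)
  convert this using 2 with x
  congr 1
  funext i; fin_cases i <;> rfl

include hF in
lemma proj0 : (fun x : Fin 2 → X => x 0) ∈ F 2 := hF.1 2 0

include hF in
lemma proj1 : (fun x : Fin 2 → X => x 1) ∈ F 2 := hF.1 2 1

include hF hcons in
lemma Mem2.union {S S'} (hS : Mem2 F S) (hS' : Mem2 F S') : Mem2 F (S ∪ S') := by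
  obtain ⟨g, hg, rfl⟩ := hS
  obtain ⟨h, hh, rfl⟩ := hS'
  refine ⟨_, comp2 hF hg hh (proj1 hF), ?_⟩
  ext ⟨x, y⟩
  by_cases hxy : x = y
  · simp [SOf, hxy]
  have he1 : (![x, y] : Fin 2 → X) 1 = y := rfl
  simp only [SOf, Set.mem_setOf_eq, Set.mem_union, ne_eq, hxy, not_false_iff, true_and, he1]
  rcases cons2 hcons hh x y with h1 | h1 <;> rw [h1]
  · constructor
    · intro h2; exact Or.inl h2
    · rintro (h2 | h2)
      · exact h2
      · exact absurd h2 hxy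
  · rw [consDiag hcons hg]
    exact ⟨fun _ => Or.inr rfl, fun _ => rfl⟩

include hF hcons in
lemma Mem2.inter {S S'} (hS : Mem2 F S) (hS' : Mem2 F S') : Mem2 F (S ∩ S') := by
  obtain ⟨g, hg, rfl⟩ := hS
  obtain ⟨h, hh, rfl⟩ := hS'
  refine ⟨_, comp2 hF hg (proj0 hF) hh, ?_⟩
  ext ⟨x, y⟩
  by_cases hxy : x = y
  · simp [SOf, hxy]
  have he0 : (![x, y] : Fin 2 → X) 0 = x := rfl
  simp only [SOf, Set.mem_setOf_eq, Set.mem_inter_iff, ne_eq, hxy, not_false_iff, true_and, he0]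
  rcases cons2 hcons hh x y with h1 | h1 <;> rw [h1]
  · rw [consDiag hcons hg]
    constructor
    · intro h2; exact absurd h2 hxy
    · rintro ⟨-, h2⟩; exact absurd h2 hxy
  · constructor
    · intro h2; exact ⟨h2, rfl⟩
    · rintro ⟨h2, -⟩; exact h2

include hF hcons in
lemma Mem2.tau {S} (hS : Mem2 F S) :
    Mem2 F {p : X × X | p.1 ≠ p.2 ∧ (p.2, p.1) ∉ S} := by
  obtain ⟨g, hg, rfl⟩ := hS
  refine ⟨_, comp2 hF hg (proj1 hF) (proj0 hF), ?_⟩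
  ext ⟨x, y⟩
  by_cases hxy : x = y
  · simp [SOf, hxy]
  have he0 : (![x, y] : Fin 2 → X) 0 = x := rfl
  have he1 : (![x, y] : Fin 2 → X) 1 = y := rfl
  simp only [SOf, Set.mem_setOf_eq, ne_eq, hxy, not_false_iff, true_and, he0, he1]
  have hyx : y ≠ x := fun e => hxy e.symm
  rcases cons2 hcons hg y x with h1 | h1 <;> rw [h1]
  · constructor
    · rintro - ⟨-, e⟩; exact hyx e
    · intro _; rfl
  · constructor
    · intro h2; exact absurd h2 hxy
    · intro h2; exact absurd ⟨hyx, rfl⟩ h2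

include hsym in
lemma Mem2.perm {S} (hS : Mem2 F S) (π : Equiv.Perm X) :
    Mem2 F {p : X × X | (π p.1, π p.2) ∈ S} := by
  obtain ⟨g, hg, rfl⟩ := hS
  refine ⟨_, hsym π 2 g hg, ?_⟩
  ext ⟨x, y⟩
  have hev : (fun i => π (![x, y] i)) = ![π x, π y] := by
    funext i; fin_cases i <;> rfl
  simp only [SOf, Set.mem_setOf_eq, hev]
  constructor
  · rintro ⟨h1, h2⟩
    exact ⟨fun e => h1 (π.injective e), (Equiv.symm_apply_eq π).mp h2⟩
  · rintro ⟨h1, h2⟩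
    exact ⟨fun e => h1 (congrArg π e), (Equiv.symm_apply_eq π).mpr h2⟩

end Clo


lemma exists_perm_extend {X : Type*} [Fintype X] {k : ℕ} (a b : Fin k → X)
    (ha : Function.Injective a) (hb : Function.Injective b) :
    ∃ π : Equiv.Perm X, ∀ i, π (a i) = b i := by
  classical
  have h1 : Fintype.card (Set.range a) = k := by
    rw [Set.card_range_of_injective ha, Fintype.card_fin]
  have h2 : Fintype.card (Set.range b) = k := by
    rw [Set.card_range_of_injective hb, Fintype.card_fin]
  have hc : Fintype.card {x // x ∉ Set.range a} = Fintype.card {x // x ∉ Set.range b} := by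
    simp only [Fintype.card_subtype_compl]
    rw [show Fintype.card {x // x ∈ Set.range a} = k from h1,
        show Fintype.card {x // x ∈ Set.range b} = k from h2]
  refine ⟨Equiv.subtypeCongr ((Equiv.ofInjective a ha).symm.trans (Equiv.ofInjective b hb))
    (Fintype.equivOfCardEq hc), fun i => ?_⟩
  have hmem : a i ∈ Set.range a := ⟨i, rfl⟩
  have h4 : (Equiv.ofInjective a ha).symm ⟨a i, hmem⟩ = i := by
    apply (Equiv.ofInjective a ha).injective
    simp
  simp [Equiv.subtypeCongr, hmem, Equiv.trans_apply, h4]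

lemma exists_perm2 {X : Type*} [Fintype X] {a b a' b' : X} (h : a ≠ b) (h' : a' ≠ b') :
    ∃ π : Equiv.Perm X, π a = a' ∧ π b = b' := by
  obtain ⟨π, hπ⟩ := exists_perm_extend ![a, b] ![a', b']
    (by intro i j hij; fin_cases i <;> fin_cases j <;> simp_all)
    (by intro i j hij; fin_cases i <;> fin_cases j <;> simp_all)
  exact ⟨π, by simpa using hπ 0, by simpa using hπ 1⟩

lemma exists_perm3 {X : Type*} [Fintype X] {a b c a' b' c' : X}
    (h1 : a ≠ b) (h2 : a ≠ c) (h3 : b ≠ c) (h1' : a' ≠ b') (h2' : a' ≠ c') (h3' : b' ≠ c') :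
    ∃ π : Equiv.Perm X, π a = a' ∧ π b = b' ∧ π c = c' := by
  obtain ⟨π, hπ⟩ := exists_perm_extend ![a, b, c] ![a', b', c']
    (by intro i j hij; fin_cases i <;> fin_cases j <;> simp_all)
    (by intro i j hij; fin_cases i <;> fin_cases j <;> simp_all)
  exact ⟨π, by simpa using hπ 0, by simpa using hπ 1, by simpa using hπ 2⟩

lemma exists_perm4 {X : Type*} [Fintype X] {a b c d a' b' c' d' : X}
    (h1 : a ≠ b) (h2 : a ≠ c) (h3 : a ≠ d) (h4 : b ≠ c) (h5 : b ≠ d) (h6 : c ≠ d)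
    (h1' : a' ≠ b') (h2' : a' ≠ c') (h3' : a' ≠ d') (h4' : b' ≠ c') (h5' : b' ≠ d')
    (h6' : c' ≠ d') :
    ∃ π : Equiv.Perm X, π a = a' ∧ π b = b' ∧ π c = c' ∧ π d = d' := by
  obtain ⟨π, hπ⟩ := exists_perm_extend ![a, b, c, d] ![a', b', c', d']
    (by intro i j hij; fin_cases i <;> fin_cases j <;> simp_all)
    (by intro i j hij; fin_cases i <;> fin_cases j <;> simp_all)
  exact ⟨π, by simpa using hπ 0, by simpa using hπ 1, by simpa using hπ 2, by simpa using hπ 3⟩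

lemma exists_fresh3 {X : Type*} [Fintype X] (hX : 5 ≤ Fintype.card X) (a b c : X) :
    ∃ u v : X, u ≠ v ∧ u ≠ a ∧ u ≠ b ∧ u ≠ c ∧ v ≠ a ∧ v ≠ b ∧ v ≠ c := by
  classical
  have hcard : ({a, b, c} : Finset X).card ≤ 3 :=
    Finset.card_le_three
  have h2 : 1 < (Finset.univ \ {a, b, c} : Finset X).card := by
    have h3 := Finset.le_card_sdiff ({a,b,c} : Finset X) Finset.univ
    have h4 : (Finset.univ : Finset X).card = Fintype.card X := Finset.card_univ
    omega
  obtain ⟨u, hu, v, hv, huv⟩ := Finset.one_lt_card.mp h2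
  simp only [Finset.mem_sdiff, Finset.mem_insert, Finset.mem_singleton] at hu hv
  push_neg at hu hv
  exact ⟨u, v, huv, hu.2.1, hu.2.2.1, hu.2.2.2, hv.2.1, hv.2.2.1, hv.2.2.2⟩

section Blocks
variable {X : Type*} [Fintype X] (T : Set (X × X))

/-- key move property coming from minimality -/
def MoveProp : Prop :=
  ∀ π : Equiv.Perm X, ∀ r ∈ T, (π r.1, π r.2) ∈ T → ∀ s ∈ T, (π s.1, π s.2) ∈ T

variable {T} (hX : 5 ≤ Fintype.card X) (move : MoveProp T)

include hX move in
/-- Two "disjoint" pairs in the minimal block force it to be everything. -/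
lemma lemA_all {c d e f : X} (hcd : c ≠ d) (hef : e ≠ f) (hce : c ≠ e) (hcf : c ≠ f)
    (hde : d ≠ e) (hdf : d ≠ f) (h1 : (c, d) ∈ T) (h2 : (e, f) ∈ T) :
    ∀ x y : X, x ≠ y → (x, y) ∈ T := by
  have step1 : ∀ x y : X, x ≠ y → x ≠ c → x ≠ d → y ≠ c → y ≠ d → (x, y) ∈ T := by
    intro x y hxy hxc hxd hyc hyd
    obtain ⟨π, hπ1, hπ2, hπ3, hπ4⟩ := exists_perm4 hcd hce hcf hde hdf hef
      hcd hxc.symm hyc.symm hxd.symm hyd.symm hxy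
    have h := move π (c, d) h1 (by simp only [hπ1, hπ2]; exact h1) (e, f) h2
    simpa only [hπ3, hπ4] using h
  have step2 : ∀ x y u v : X, x ≠ y → u ≠ v → u ≠ c → u ≠ d → v ≠ c → v ≠ d →
      u ≠ x → u ≠ y → v ≠ x → v ≠ y → (x, y) ∈ T := by
    intro x y u v hxy huv huc hud hvc hvd hux huy hvx hvy
    have hanch : (u, v) ∈ T := step1 u v huv huc hud hvc hvd
    obtain ⟨π, hπ1, hπ2, hπ3, hπ4⟩ := exists_perm4 huv huc hud hvc hvd hcd
      huv hux huy hvx hvy hxy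
    have h := move π (u, v) hanch (by simp only [hπ1, hπ2]; exact hanch) (c, d) h1
    simpa only [hπ3, hπ4] using h
  intro x y hxy
  by_cases hx : x ≠ c ∧ x ≠ d ∧ y ≠ c ∧ y ≠ d
  · exact step1 x y hxy hx.1 hx.2.1 hx.2.2.1 hx.2.2.2
  · push_neg at hx
    by_cases hxc : x = c
    · subst hxc
      obtain ⟨u, v, huv, hu1, hu2, hu3, hv1, hv2, hv3⟩ := exists_fresh3 hX x d y
      exact step2 x y u v hxy huv hu1 hu2 hv1 hv2 hu1 hu3 hv1 hv3
    by_cases hxd : x = d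
    · subst hxd
      obtain ⟨u, v, huv, hu1, hu2, hu3, hv1, hv2, hv3⟩ := exists_fresh3 hX c x y
      exact step2 x y u v hxy huv hu1 hu2 hv1 hv2 hu2 hu3 hv2 hv3
    by_cases hyc : y = c
    · subst hyc
      obtain ⟨u, v, huv, hu1, hu2, hu3, hv1, hv2, hv3⟩ := exists_fresh3 hX y d x
      exact step2 x y u v hxy huv hu1 hu2 hv1 hv2 hu3 hu1 hv3 hv1
    · have hyd : y = d := by tauto
      subst hyd
      obtain ⟨u, v, huv, hu1, hu2, hu3, hv1, hv2, hv3⟩ := exists_fresh3 hX c y x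
      exact step2 x y u v hxy huv hu1 hu2 hv1 hv2 hu3 hu2 hv3 hv2

end Blocks

section Blocks2
variable {X : Type*} [Fintype X] (T : Set (X × X))

def TauProp : Prop :=
  ∀ π : Equiv.Perm X, ∀ r ∈ T, (π r.2, π r.1) ∉ T → ∀ s ∈ T, (π s.2, π s.1) ∉ T

variable {T} (hX : 5 ≤ Fintype.card X) (move : MoveProp T) (tauP : TauProp T)
  (hnotall : ¬ ∀ x y : X, x ≠ y → (x, y) ∈ T)

include hX move hnotall in
lemma lemA {c d e f : X} (hcd : c ≠ d) (hef : e ≠ f) (hce : c ≠ e) (hcf : c ≠ f)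
    (hde : d ≠ e) (hdf : d ≠ f) (h1 : (c, d) ∈ T) (h2 : (e, f) ∈ T) : False :=
  hnotall fun x y hxy => lemA_all hX move hcd hef hce hcf hde hdf h1 h2 x y hxy

include hX move tauP hnotall in
lemma lemColshare {c d e : X} (hcd : c ≠ d) (hec : e ≠ c) (hed : e ≠ d)
    (h1 : (c, d) ∈ T) (h2 : (e, d) ∈ T) : False := by
  classical
  have hce : (c, e) ∈ T := by
    by_contra hce
    have hswap := tauP (Equiv.swap c d) (e, d) h2
      (by
        rw [show (Equiv.swap c d) d = c from Equiv.swap_apply_right c d,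
          show (Equiv.swap c d) e = e from Equiv.swap_apply_of_ne_of_ne hec hed]
        exact hce)
      (c, d) h1
    rw [show (Equiv.swap c d) d = c from Equiv.swap_apply_right c d,
      show (Equiv.swap c d) c = d from Equiv.swap_apply_left c d] at hswap
    exact hswap h1
  -- now (c,d), (e,d), (c,e) ∈ T; produce disjoint pairs
  obtain ⟨u, v, huv, hu1, hu2, hu3, hv1, hv2, hv3⟩ := exists_fresh3 hX c d e
  -- π fixing c,d sending e ↦ u, so (u,d) ∈ T
  obtain ⟨π, hπ1, hπ2, hπ3⟩ := exists_perm3 hcd hec.symm hed.symm hcd hu1.symm hu2.symm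
  have hud : (u, d) ∈ T := by
    have h := move π (c, d) h1 (by simp only [hπ1, hπ2]; exact h1) (e, d) h2
    simpa only [hπ2, hπ3] using h
  -- pairs (c,e) and (u,d) are disjoint
  exact lemA hX move hnotall hec.symm hu2 hu1.symm hcd hu3.symm hed hce hud

include hX move tauP hnotall in
lemma lemRowshare {c d e : X} (hcd : c ≠ d) (hec : e ≠ c) (hed0 : e ≠ d)
    (h1 : (c, d) ∈ T) (h2 : (c, e) ∈ T) : False := by
  classical
  have hed : (e, d) ∈ T := by
    by_contra hed
    have hswap := tauP (Equiv.swap c d) (c, e) h2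
      (by
        rw [show (Equiv.swap c d) e = e from Equiv.swap_apply_of_ne_of_ne hec hed0,
          show (Equiv.swap c d) c = d from Equiv.swap_apply_left c d]
        exact hed)
      (c, d) h1
    rw [show (Equiv.swap c d) d = c from Equiv.swap_apply_right c d,
      show (Equiv.swap c d) c = d from Equiv.swap_apply_left c d] at hswap
    exact hswap h1
  exact lemColshare hX move tauP hnotall hcd hec hed0 h1 hed

include hX move hnotall in
lemma lemDiag1 {c d e : X} (hcd : c ≠ d) (hec : e ≠ c) (hed : e ≠ d)
    (h1 : (c, d) ∈ T) (h2 : (d, e) ∈ T) : False := by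
  obtain ⟨u, v, huv, hu1, hu2, hu3, hv1, hv2, hv3⟩ := exists_fresh3 hX c d e
  have h1' : (u, d) ∈ T := by
    obtain ⟨π, hπ1, hπ2, hπ3⟩ := exists_perm3 hed.symm hcd.symm hec hed.symm hu2.symm hu3.symm
    have h := move π (d, e) h2 (by simp only [hπ1, hπ2]; exact h2) (c, d) h1
    simpa only [hπ1, hπ3] using h
  have h2' : (d, v) ∈ T := by
    obtain ⟨π, hπ1, hπ2, hπ3⟩ := exists_perm3 hcd hec.symm hed.symm hcd hv1.symm hv2.symm
    have h := move π (c, d) h1 (by simp only [hπ1, hπ2]; exact h1) (d, e) h2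
    simpa only [hπ2, hπ3] using h
  obtain ⟨π, hπ1, hπ2, hπ3⟩ := exists_perm3 hv2.symm hu2.symm huv.symm hu2 huv hv2.symm
  have hvu : (v, u) ∈ T := by
    have hunlock := move π (d, v) h2' (by simp only [hπ1, hπ2]; exact h1') (u, d) h1'
    simpa only [hπ1, hπ3] using hunlock
  exact lemA hX move hnotall hcd huv.symm hv1.symm hu1.symm hv2.symm hu2.symm h1 hvu

include hX move tauP hnotall in
lemma lemDiag2 {c d e : X} (hcd : c ≠ d) (hec : e ≠ c) (hed : e ≠ d)
    (h1 : (c, d) ∈ T) (h2 : (e, c) ∈ T) : False := by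
  obtain ⟨u, v, huv, hu1, hu2, hu3, hv1, hv2, hv3⟩ := exists_fresh3 hX c d e
  have h1' : (u, c) ∈ T := by
    obtain ⟨π, hπ1, hπ2, hπ3⟩ := exists_perm3 hcd hec.symm hed.symm hcd hu1.symm hu2.symm
    have h := move π (c, d) h1 (by simp only [hπ1, hπ2]; exact h1) (e, c) h2
    simpa only [hπ1, hπ3] using h
  have h2' : (c, v) ∈ T := by
    obtain ⟨π, hπ1, hπ2, hπ3⟩ := exists_perm3 hec hed hcd hec hv3.symm hv1.symm
    have h := move π (e, c) h2 (by simp only [hπ1, hπ2]; exact h2) (c, d) h1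
    simpa only [hπ2, hπ3] using h
  obtain ⟨π, hπ1, hπ2, hπ3, hπ4⟩ := exists_perm4 hu1 huv hu2 hv1.symm hcd hv2
    hv1.symm hu1.symm hcd huv.symm hv2 hu2
  have hvd : (v, d) ∈ T := by
    have hunlock := move π (u, c) h1' (by simp only [hπ1, hπ2]; exact h2') (c, d) h1
    simpa only [hπ2, hπ4] using hunlock
  exact lemColshare hX move tauP hnotall hcd hv1 hv2 h1 hvd

include hX move tauP hnotall in
lemma classify {c d : X} (hcd : c ≠ d) (hcdT : (c, d) ∈ T)
    (hTD : ∀ p ∈ T, p.1 ≠ p.2) :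
    ∀ q ∈ T, q = (c, d) ∨ q = (d, c) := by
  rintro ⟨x, y⟩ hq
  by_contra hcon
  push_neg at hcon
  obtain ⟨hq1, hq2⟩ := hcon
  have hxy : x ≠ y := hTD (x, y) hq
  by_cases hxc : x = c
  · subst hxc
    have hyd : y ≠ d := fun e => hq1 (by rw [e])
    exact lemRowshare hX move tauP hnotall hcd (fun e => hxy e.symm) hyd hcdT hq
  by_cases hxd : x = d
  · subst hxd
    have hyc : y ≠ c := fun e => hq2 (by rw [e])
    exact lemDiag1 hX move hnotall hcd hyc (fun e => hxy e.symm) hcdT hq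
  by_cases hyd : y = d
  · subst hyd
    exact lemColshare hX move tauP hnotall hcd hxc hxd hcdT hq
  by_cases hyc : y = c
  · subst hyc
    exact lemDiag2 hX move tauP hnotall hcd hxc hxd hcdT hq
  · exact lemA hX move hnotall hcd hxy (fun e => hxc e.symm) (fun e => hyc e.symm)
      (fun e => hxd e.symm) (fun e => hyd e.symm) hcdT hq

end Blocks2



theorem stmt13 {X : Type*} [Fintype X] (hX : 5 ≤ Fintype.card X)
    (F : ∀ n : ℕ, Set ((Fin n → X) → X)) (hF : IsClone F) (hsym : SymClone F)
    (hcons : Conservative F) (hbin : ∃ f ∈ F 2, ¬ IsProj 2 f) :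
    ∀ a₁ a₂ : X, a₁ ≠ a₂ → ∃ f ∈ F 2,
      f ![a₁, a₂] = a₂ ∧ f ![a₂, a₁] = a₁ ∧
      ∀ b₁ b₂ : X, b₁ ≠ b₂ → ({b₁, b₂} : Set X) ≠ {a₁, a₂} → f ![b₁, b₂] = b₁ := by
  classical
  intro a₁ a₂ ha
  obtain ⟨f0, hf0, hnp⟩ := hbin
  have hS0mem : Mem2 F (SOf f0) := ⟨f0, hf0, rfl⟩
  have hS0ne : (SOf f0).Nonempty := by
    by_contra hne
    have hempty : SOf f0 = (∅ : Set (X × X)) := Set.not_nonempty_iff_eq_empty.mp hne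
    apply hnp
    refine ⟨0, fun x => ?_⟩
    have hx0 : f0 ![x 0, x 1] = x 0 := by
      by_cases h01 : x 0 = x 1
      · rw [h01]; exact consDiag hcons hf0 (x 1)
      · rcases cons2 hcons hf0 (x 0) (x 1) with h | h
        · exact h
        · exfalso
          have hmem : (x 0, x 1) ∈ SOf f0 := ⟨h01, h⟩
          rw [hempty] at hmem
          exact hmem
    calc f0 x = f0 ![x 0, x 1] := by rw [vec2_eta]
    _ = x 0 := hx0
  have hS0wit : ∃ w : X × X, w.1 ≠ w.2 ∧ w ∉ SOf f0 := by
    by_contra hwit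
    push_neg at hwit
    apply hnp
    refine ⟨1, fun x => ?_⟩
    have hx0 : f0 ![x 0, x 1] = x 1 := by
      by_cases h01 : x 0 = x 1
      · rw [h01]; exact consDiag hcons hf0 (x 1)
      · exact (hwit (x 0, x 1) h01).2
    calc f0 x = f0 ![x 0, x 1] := by rw [vec2_eta]
    _ = x 1 := hx0
  obtain ⟨T, hTmem, hTne, hTcard⟩ :=
    Nat.sInf_mem (s := {n | ∃ S : Set (X × X), Mem2 F S ∧ S.Nonempty ∧ S.ncard = n})
      ⟨(SOf f0).ncard, SOf f0, hS0mem, hS0ne, rfl⟩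
  have hmin : ∀ M : Set (X × X), Mem2 F M → M.Nonempty → T.ncard ≤ M.ncard := by
    intro M hM hMne
    rw [hTcard]
    exact Nat.sInf_le ⟨M, hM, hMne, rfl⟩
  have hsub : ∀ M : Set (X × X), Mem2 F M → (T ∩ M).Nonempty → T ⊆ M := by
    intro M hM hne'
    have h1 : Mem2 F (T ∩ M) := Mem2.inter hF hcons hTmem hM
    have h2 : T.ncard ≤ (T ∩ M).ncard := hmin _ h1 hne'
    have h3 : T ∩ M = T :=
      Set.eq_of_subset_of_ncard_le Set.inter_subset_left h2 (Set.toFinite T)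
    intro p hp
    rw [← h3] at hp
    exact hp.2
  have hTD : ∀ p ∈ T, p.1 ≠ p.2 := by
    obtain ⟨g, hg, rfl⟩ := hTmem
    exact fun p hp => hp.1
  have move : MoveProp T := by
    intro π r hr hπr s hs
    exact hsub _ (Mem2.perm hsym hTmem π) ⟨r, hr, hπr⟩ hs
  have tauP : TauProp T := by
    intro π r hr hπr s hs
    have hM : Mem2 F {p : X × X | p.1 ≠ p.2 ∧ (π p.2, π p.1) ∉ T} :=
      Mem2.tau hF hcons (Mem2.perm hsym hTmem π)
    exact (hsub _ hM ⟨r, hr, hTD r hr, hπr⟩ hs).2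
  have hnotall : ¬ ∀ x y : X, x ≠ y → (x, y) ∈ T := by
    intro hall
    obtain ⟨q, hq⟩ := hS0ne
    have hqD : q.1 ≠ q.2 := hq.1
    have hTS : T ⊆ SOf f0 :=
      hsub _ hS0mem ⟨q, by simpa using hall q.1 q.2 hqD, hq⟩
    obtain ⟨w, hw1, hw2⟩ := hS0wit
    exact hw2 (hTS (by simpa using hall w.1 w.2 hw1))
  obtain ⟨⟨c, d⟩, hcdT⟩ := hTne
  have hcd : c ≠ d := hTD _ hcdT
  have hclass := classify hX move tauP hnotall hcd hcdT hTD
  obtain ⟨π₁, hπ₁a, hπ₁b⟩ := exists_perm2 ha hcd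
  obtain ⟨π₂, hπ₂a, hπ₂b⟩ := exists_perm2 ha hcd.symm
  have hU : Mem2 F ({p : X × X | (π₁ p.1, π₁ p.2) ∈ T} ∪ {p : X × X | (π₂ p.1, π₂ p.2) ∈ T}) :=
    Mem2.union hF hcons (Mem2.perm hsym hTmem π₁) (Mem2.perm hsym hTmem π₂)
  obtain ⟨g, hg, hSg⟩ := hU
  refine ⟨g, hg, ?_, ?_, ?_⟩
  · have hm : (a₁, a₂) ∈ SOf g := by
      rw [hSg]
      left
      show (π₁ a₁, π₁ a₂) ∈ T
      rw [hπ₁a, hπ₁b]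
      exact hcdT
    exact hm.2
  · have hm : (a₂, a₁) ∈ SOf g := by
      rw [hSg]
      right
      show (π₂ a₂, π₂ a₁) ∈ T
      rw [hπ₂a, hπ₂b]
      exact hcdT
    exact hm.2
  · intro b₁ b₂ hb hset
    have hnot : (b₁, b₂) ∉ SOf g := by
      rw [hSg]
      rintro (h | h)
      · rcases hclass _ h with h' | h'
        · have e1 : b₁ = a₁ := π₁.injective (by rw [hπ₁a]; exact congrArg Prod.fst h')
          have e2 : b₂ = a₂ := π₁.injective (by rw [hπ₁b]; exact congrArg Prod.snd h')
          exact hset (by rw [e1, e2])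
        · have e1 : b₁ = a₂ := π₁.injective (by rw [hπ₁b]; exact congrArg Prod.fst h')
          have e2 : b₂ = a₁ := π₁.injective (by rw [hπ₁a]; exact congrArg Prod.snd h')
          exact hset (by rw [e1, e2]; exact Set.pair_comm a₂ a₁)
      · rcases hclass _ h with h' | h'
        · have e1 : b₁ = a₂ := π₂.injective (by rw [hπ₂b]; exact congrArg Prod.fst h')
          have e2 : b₂ = a₁ := π₂.injective (by rw [hπ₂a]; exact congrArg Prod.snd h')
          exact hset (by rw [e1, e2]; exact Set.pair_comm a₂ a₁)
        · have e1 : b₁ = a₁ := π₂.injective (by rw [hπ₂a]; exact congrArg Prod.fst h')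
          have e2 : b₂ = a₂ := π₂.injective (by rw [hπ₂b]; exact congrArg Prod.snd h')
          exact hset (by rw [e1, e2])
    rcases cons2 hcons hg b₁ b₂ with h | h
    · exact h
    · exact absurd ⟨hb, h⟩ hnot
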